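/- Consider the closed-loop system: x̃ : [0,∞) → ℝⁿ and x̃_c : [0,∞) → ℝ^{nG} are differentiable and satisfy x̃'(t) = (J − R̃(x̃(t)))·Q·x̃(t) + g·ũ(t) and x̃_c'(t) = −k_I·𝓛·ũ_c(t), where ỹ(t) = gᵀQx̃(t), ỹ_c(t) = −𝓛·x̃_c(t), ũ(t) = −r·ỹ(t) − w⁻¹·ỹ_c(t), ũ_c(t) = (w⁻¹)ᵀ·ỹ(t), with w invertible and 𝓛 symmetric. Suppose that for every t ≥ 0 and every v ∈ ℝⁿ one has vᵀ·(R̃(x̃(t)) + g·r·gᵀ)·v ≥ 0 (in particular this holds when the symmetric part of R_D + r is positive semidefinite and x̃(t) stays in the domain 𝔻 where G − G_P(q̃(t)) has nonnegative entries). Then the total storage H_t(t) = ½x̃(t)ᵀQx̃(t) + ½x̃_c(t)ᵀk_I⁻¹x̃_c(t) is nonincreasing on [0,∞); in particular x̃(t)ᵀQx̃(t) + x̃_c(t)ᵀk_I⁻¹x̃_c(t) ≤ x̃(0)ᵀQx̃(0) + x̃_c(0)ᵀk_I⁻¹x̃_c(0) for all t ≥ 0, so every trajectory is bounded. -/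

import Mathlib

open Matrix

/-- Index type of the microgrid state: generator currents, line currents, bus charges. -/
abbrev BIdx (nG nE nN : ℕ) := Fin nG ⊕ (Fin nE ⊕ Fin nN)

/-- The input matrix `g = [I; 0; 0]`. -/
noncomputable def gMat (nG nE nN : ℕ) : Matrix (BIdx nG nE nN) (Fin nG) ℝ :=
  Matrix.of fun i j =>
    match i with
    | Sum.inl i' => if i' = j then (1 : ℝ) else 0
    | Sum.inr _ => 0

/-- Block-diagonal matrix with three diagonal blocks. -/
noncomputable def bd3 {nG nE nN : ℕ} (A : Matrix (Fin nG) (Fin nG) ℝ)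
    (B : Matrix (Fin nE) (Fin nE) ℝ) (D : Matrix (Fin nN) (Fin nN) ℝ) :
    Matrix (BIdx nG nE nN) (BIdx nG nE nN) ℝ :=
  Matrix.fromBlocks A 0 0 (Matrix.fromBlocks B 0 0 D)

/-- `G_P(q̃) = diag (P_k C_k² / (q̄_k (q̃_k + q̄_k)))`. -/
noncomputable def GPm {nN : ℕ} (P cD qbar : Fin nN → ℝ) (qt : Fin nN → ℝ) :
    Matrix (Fin nN) (Fin nN) ℝ :=
  Matrix.diagonal fun k => P k * (cD k) ^ 2 / (qbar k * (qt k + qbar k))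

/-- The state-dependent dissipation matrix
`R̃(z̃) = blockdiag(R_G + R_D, R_E, G − G_P(q̃))` of the incremental microgrid model. -/
noncomputable def Rtil {nG nE nN : ℕ} (rG rD : Fin nG → ℝ) (rE : Fin nE → ℝ)
    (gD cD P qbar : Fin nN → ℝ) (z : BIdx nG nE nN → ℝ) :
    Matrix (BIdx nG nE nN) (BIdx nG nE nN) ℝ :=
  bd3 (Matrix.diagonal fun i => rG i + rD i) (Matrix.diagonal rE)
    (Matrix.diagonal gD - GPm P cD qbar fun k => z (Sum.inr (Sum.inr k)))


lemma mulVec_dot_eq {ι κ : Type*} [Fintype ι] [Fintype κ] (M : Matrix κ ι ℝ)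
    (a : ι → ℝ) (b : κ → ℝ) : (M *ᵥ a) ⬝ᵥ b = a ⬝ᵥ (Mᵀ *ᵥ b) := by
  rw [Matrix.dotProduct_mulVec, Matrix.vecMul_transpose]

lemma dot_mulVec_symm {ι : Type*} [Fintype ι] {M : Matrix ι ι ℝ} (hM : Mᵀ = M)
    (a b : ι → ℝ) : a ⬝ᵥ (M *ᵥ b) = b ⬝ᵥ (M *ᵥ a) := by
  rw [dotProduct_comm, mulVec_dot_eq, hM]

lemma hasDerivAt_dot {ι : Type*} [Fintype ι] {u v : ℝ → ι → ℝ} {u' v' : ι → ℝ} {t : ℝ}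
    (hu : HasDerivAt u u' t) (hv : HasDerivAt v v' t) :
    HasDerivAt (fun s => u s ⬝ᵥ v s) (u' ⬝ᵥ v t + u t ⬝ᵥ v') t := by
  have : HasDerivAt (fun s => ∑ i, u s i * v s i)
      (∑ i, (u' i * v t i + u t i * v' i)) t :=
    HasDerivAt.fun_sum fun i _ => (hasDerivAt_pi.mp hu i).mul (hasDerivAt_pi.mp hv i)
  simpa [dotProduct, Finset.sum_add_distrib] using this

lemma hasDerivAt_mulVec {ι κ : Type*} [Fintype ι] [Fintype κ] (M : Matrix κ ι ℝ)
    {x : ℝ → ι → ℝ} {x' : ι → ℝ} {t : ℝ} (hx : HasDerivAt x x' t) :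
    HasDerivAt (fun s => M *ᵥ x s) (M *ᵥ x') t := by
  rw [hasDerivAt_pi]
  intro i
  simp only [Matrix.mulVec, dotProduct]
  exact HasDerivAt.fun_sum fun j _ => (hasDerivAt_pi.mp hx j).const_mul (M i j)

lemma posdef_lower {ι : Type*} [Fintype ι] [Nonempty ι] {Q : Matrix ι ι ℝ}
    (hQ : Q.PosDef) : ∃ c > 0, ∀ v : ι → ℝ, c * ‖v‖ ^ 2 ≤ v ⬝ᵥ (Q *ᵥ v) := by
  have hcont : Continuous fun v : ι → ℝ => v ⬝ᵥ (Q *ᵥ v) := by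
    simp only [dotProduct, Matrix.mulVec]
    exact continuous_finset_sum _ fun i _ => (continuous_apply i).mul
      (continuous_finset_sum _ fun j _ => continuous_const.mul (continuous_apply j))
  have h1 : (Metric.sphere (0 : ι → ℝ) 1).Nonempty :=
    NormedSpace.sphere_nonempty.mpr zero_le_one
  obtain ⟨v₀, hv₀, hmin⟩ := (isCompact_sphere (0 : ι → ℝ) 1).exists_isMinOn h1
    hcont.continuousOn
  have hv₀norm : ‖v₀‖ = 1 := by simpa using hv₀
  have hv₀ne : v₀ ≠ 0 := by
    intro h; rw [h] at hv₀norm; simp at hv₀norm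
  have hc : 0 < v₀ ⬝ᵥ (Q *ᵥ v₀) := by
    have := hQ.dotProduct_mulVec_pos hv₀ne
    simpa using this
  refine ⟨v₀ ⬝ᵥ (Q *ᵥ v₀), hc, fun v => ?_⟩
  rcases eq_or_ne v 0 with rfl | hv
  · simp
  · have hvn : 0 < ‖v‖ := norm_pos_iff.mpr hv
    set u : ι → ℝ := ‖v‖⁻¹ • v with hu
    have hus : u ∈ Metric.sphere (0 : ι → ℝ) 1 := by
      simp [hu, norm_smul, abs_of_pos (inv_pos.mpr hvn), inv_mul_cancel₀ hvn.ne']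
    have hq : u ⬝ᵥ (Q *ᵥ u) = ‖v‖⁻¹ * (‖v‖⁻¹ * (v ⬝ᵥ (Q *ᵥ v))) := by
      simp [hu, Matrix.mulVec_smul, smul_dotProduct, dotProduct_smul, smul_eq_mul]
    have := hmin hus
    simp only [Set.mem_setOf_eq] at this
    rw [hq] at this
    have h2 : (v₀ ⬝ᵥ (Q *ᵥ v₀)) * ‖v‖ ^ 2 ≤ ‖v‖⁻¹ * (‖v‖⁻¹ * (v ⬝ᵥ (Q *ᵥ v))) * ‖v‖ ^ 2 := by
      nlinarith [sq_nonneg ‖v‖]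
    calc (v₀ ⬝ᵥ (Q *ᵥ v₀)) * ‖v‖ ^ 2 ≤ ‖v‖⁻¹ * (‖v‖⁻¹ * (v ⬝ᵥ (Q *ᵥ v))) * ‖v‖ ^ 2 := h2
      _ = v ⬝ᵥ (Q *ᵥ v) := by rw [pow_two]; field_simp


/-- **Lyapunov part of Proposition 2.** If along the closed loop the
dissipation quadratic form `vᵀ(R̃(x̃(t)) + g r gᵀ)v` is nonnegative for all `t ≥ 0`,
then the total storage `H_t = ½x̃ᵀQx̃ + ½x̃_cᵀk_I⁻¹x̃_c` is nonincreasing on `[0,∞)`;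
in particular `x̃(t)ᵀQx̃(t) + x̃_c(t)ᵀk_I⁻¹x̃_c(t) ≤ x̃(0)ᵀQx̃(0) + x̃_c(0)ᵀk_I⁻¹x̃_c(0)`
for all `t ≥ 0`, and every trajectory is bounded. -/
theorem closed_loop_storage_nonincreasing
    (nG nE nN : ℕ) (hnG : 0 < nG) (hnE : 0 < nE) (hnN : 0 < nN)
    (rG rD : Fin nG → ℝ) (rE : Fin nE → ℝ) (gD cD : Fin nN → ℝ)
    (hrG : ∀ i, 0 < rG i) (hrD : ∀ i, 0 < rD i) (hrE : ∀ j, 0 < rE j)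
    (hcD : ∀ k, 0 < cD k) (hgD : ∀ k, 0 ≤ gD k)
    (Q : Matrix (BIdx nG nE nN) (BIdx nG nE nN) ℝ) (hQsymm : Q.IsSymm) (hQpd : Q.PosDef)
    (J : Matrix (BIdx nG nE nN) (BIdx nG nE nN) ℝ) (hJ : Jᵀ = -J)
    (P qbar : Fin nN → ℝ) (hqbar : ∀ k, qbar k ≠ 0)
    (kd : Fin nG → ℝ) (hkd : ∀ i, 0 < kd i)
    (L : Matrix (Fin nG) (Fin nG) ℝ) (hL : L.IsSymm)
    (r w : Matrix (Fin nG) (Fin nG) ℝ) (hw : IsUnit w.det)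
    (xt : ℝ → (BIdx nG nE nN → ℝ)) (xc : ℝ → (Fin nG → ℝ))
    (hxdiff : ∀ t : ℝ, 0 ≤ t → HasDerivAt xt
      ((J - Rtil rG rD rE gD cD P qbar (xt t)) *ᵥ (Q *ᵥ xt t) +
        gMat nG nE nN *ᵥ
          (-(r *ᵥ ((gMat nG nE nN)ᵀ *ᵥ (Q *ᵥ xt t))) - w⁻¹ *ᵥ (-(L *ᵥ xc t)))) t)
    (hxcdiff : ∀ t : ℝ, 0 ≤ t → HasDerivAt xc
      (-((Matrix.diagonal kd * L) *ᵥ ((w⁻¹)ᵀ *ᵥ ((gMat nG nE nN)ᵀ *ᵥ (Q *ᵥ xt t))))) t)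
    (hpsd : ∀ t : ℝ, 0 ≤ t → ∀ v : BIdx nG nE nN → ℝ,
      0 ≤ v ⬝ᵥ ((Rtil rG rD rE gD cD P qbar (xt t) + gMat nG nE nN * r * (gMat nG nE nN)ᵀ)
        *ᵥ v)) :
    AntitoneOn (fun t => (1 / 2 : ℝ) * ((xt t) ⬝ᵥ (Q *ᵥ xt t)) +
        (1 / 2 : ℝ) * ((xc t) ⬝ᵥ ((Matrix.diagonal kd)⁻¹ *ᵥ xc t))) (Set.Ici 0) ∧
    (∀ t : ℝ, 0 ≤ t →
      (xt t) ⬝ᵥ (Q *ᵥ xt t) + (xc t) ⬝ᵥ ((Matrix.diagonal kd)⁻¹ *ᵥ xc t) ≤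
      (xt 0) ⬝ᵥ (Q *ᵥ xt 0) + (xc 0) ⬝ᵥ ((Matrix.diagonal kd)⁻¹ *ᵥ xc 0)) ∧
    (∃ M : ℝ, ∀ t : ℝ, 0 ≤ t → ‖xt t‖ ≤ M ∧ ‖xc t‖ ≤ M) := by
  classical
  have hQT : Qᵀ = Q := hQsymm
  have hLT : Lᵀ = L := hL
  set g : Matrix (BIdx nG nE nN) (Fin nG) ℝ := gMat nG nE nN with hgdef
  set K : Matrix (Fin nG) (Fin nG) ℝ := Matrix.diagonal kd with hKdef
  have hKinv : K⁻¹ = Matrix.diagonal (fun i => (kd i)⁻¹) := by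
    refine Matrix.inv_eq_right_inv ?_
    have h1 : (fun i => kd i * (kd i)⁻¹) = fun _ => (1 : ℝ) :=
      funext fun i => mul_inv_cancel₀ (hkd i).ne'
    rw [hKdef, Matrix.diagonal_mul_diagonal, h1, Matrix.diagonal_one]
  have hKinvT : (K⁻¹)ᵀ = K⁻¹ := by rw [hKinv, Matrix.diagonal_transpose]
  have hKdet : IsUnit K.det := by
    rw [hKdef, Matrix.det_diagonal]
    exact isUnit_iff_ne_zero.mpr (Finset.prod_ne_zero_iff.mpr fun i _ => (hkd i).ne')
  have hKT : Kᵀ = K := by rw [hKdef, Matrix.diagonal_transpose]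
  set H : ℝ → ℝ := fun s => (1 / 2 : ℝ) * ((xt s) ⬝ᵥ (Q *ᵥ xt s)) +
      (1 / 2 : ℝ) * ((xc s) ⬝ᵥ (K⁻¹ *ᵥ xc s)) with hHdef
  -- the derivative of the storage function
  have key : ∀ t : ℝ, 0 ≤ t → HasDerivAt H
      (-((Q *ᵥ xt t) ⬝ᵥ ((Rtil rG rD rE gD cD P qbar (xt t) + g * r * gᵀ) *ᵥ (Q *ᵥ xt t)))) t := by
    intro t ht
    have hx := hxdiff t ht
    have hc := hxcdiff t ht
    have hD := ((hasDerivAt_dot hx (hasDerivAt_mulVec Q hx)).const_mul (1/2 : ℝ)).add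
      ((hasDerivAt_dot hc (hasDerivAt_mulVec (K⁻¹) hc)).const_mul (1/2 : ℝ))
    convert hD using 1
    case e'_4 => rfl
    case e'_5 => rfl
    case e'_8 => rfl
    set R := Rtil rG rD rE gD cD P qbar (xt t) with hR
    set v : BIdx nG nE nN → ℝ := Q *ᵥ xt t with hv
    set c : Fin nG → ℝ := xc t with hcv
    set y : Fin nG → ℝ := gᵀ *ᵥ v with hy
    set x' : BIdx nG nE nN → ℝ :=
      (J - R) *ᵥ v + g *ᵥ (-(r *ᵥ y) - w⁻¹ *ᵥ (-(L *ᵥ c))) with hx'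
    set c' : Fin nG → ℝ := -((K * L) *ᵥ ((w⁻¹)ᵀ *ᵥ y)) with hc'
    have e1 : xt t ⬝ᵥ (Q *ᵥ x') = x' ⬝ᵥ v := by
      rw [dot_mulVec_symm hQT, ← hv, dotProduct_comm]
    have e2 : c ⬝ᵥ (K⁻¹ *ᵥ c') = c' ⬝ᵥ (K⁻¹ *ᵥ c) := dot_mulVec_symm hKinvT c c'
    -- main cancellation identity
    have hJv : (J *ᵥ v) ⬝ᵥ v = 0 := by
      have h := mulVec_dot_eq J v v
      rw [hJ, Matrix.neg_mulVec, dotProduct_neg] at h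
      rw [dotProduct_comm] at h ⊢
      linarith
    have hgr : v ⬝ᵥ ((g * r * gᵀ) *ᵥ v) = y ⬝ᵥ (r *ᵥ y) := by
      rw [← Matrix.mulVec_mulVec, ← Matrix.mulVec_mulVec, dotProduct_comm,
        mulVec_dot_eq, ← hy, dotProduct_comm]
    have hx'v : x' ⬝ᵥ v = -(v ⬝ᵥ (R *ᵥ v)) - y ⬝ᵥ (r *ᵥ y) + y ⬝ᵥ (w⁻¹ *ᵥ (L *ᵥ c)) := by
      rw [hx', add_dotProduct, Matrix.sub_mulVec, sub_dotProduct,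
        mulVec_dot_eq g _ v, ← hy, hJv, Matrix.mulVec_neg, sub_neg_eq_add,
        add_dotProduct, neg_dotProduct, dotProduct_comm (r *ᵥ y) y,
        dotProduct_comm (w⁻¹ *ᵥ (L *ᵥ c)) y, dotProduct_comm (R *ᵥ v) v]
      ring
    have hKK : Kᵀ *ᵥ (K⁻¹ *ᵥ c) = c := by
      rw [hKT, Matrix.mulVec_mulVec, Matrix.mul_nonsing_inv K hKdet, Matrix.one_mulVec]
    have hc'K : c' ⬝ᵥ (K⁻¹ *ᵥ c) = -(y ⬝ᵥ (w⁻¹ *ᵥ (L *ᵥ c))) := by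
      rw [hc', neg_dotProduct, ← Matrix.mulVec_mulVec, mulVec_dot_eq K _ _, hKK,
        mulVec_dot_eq L _ _, hLT, mulVec_dot_eq ((w⁻¹)ᵀ) _ _, Matrix.transpose_transpose]
    rw [e1, e2, hx'v, hc'K, add_mulVec, dotProduct_add, hgr]
    ring
  have hA : AntitoneOn H (Set.Ici 0) := by
    apply antitoneOn_of_deriv_nonpos (convex_Ici 0)
    · exact fun t ht => ((key t ht).continuousAt).continuousWithinAt
    · rw [interior_Ici]
      exact fun t ht => ((key t (le_of_lt ht)).differentiableAt).differentiableWithinAt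
    · intro t ht
      rw [interior_Ici] at ht
      rw [(key t ht.le).deriv]
      exact neg_nonpos.mpr (hpsd t ht.le (Q *ᵥ xt t))
  have part2 : ∀ t : ℝ, 0 ≤ t →
      (xt t) ⬝ᵥ (Q *ᵥ xt t) + (xc t) ⬝ᵥ (K⁻¹ *ᵥ xc t) ≤
      (xt 0) ⬝ᵥ (Q *ᵥ xt 0) + (xc 0) ⬝ᵥ (K⁻¹ *ᵥ xc 0) := by
    intro t ht
    have := hA Set.self_mem_Ici ht ht
    simp only [hHdef] at this
    linarith
  refine ⟨hA, part2, ?_⟩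
  -- boundedness
  have hne1 : Nonempty (BIdx nG nE nN) := ⟨Sum.inl ⟨0, hnG⟩⟩
  have hne2 : Nonempty (Fin nG) := ⟨⟨0, hnG⟩⟩
  obtain ⟨c1, hc1, hb1⟩ := posdef_lower hQpd
  have hKpd : (K⁻¹).PosDef := by
    rw [hKinv]
    exact Matrix.PosDef.diagonal fun i => inv_pos.mpr (hkd i)
  obtain ⟨c2, hc2, hb2⟩ := posdef_lower hKpd
  set B : ℝ := (xt 0) ⬝ᵥ (Q *ᵥ xt 0) + (xc 0) ⬝ᵥ (K⁻¹ *ᵥ xc 0) with hB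
  clear_value B
  have hq1 : ∀ t : ℝ, 0 ≤ t → c1 * ‖xt t‖ ^ 2 ≤ B := by
    intro t ht
    have h1 := hb1 (xt t)
    have h2 := hb2 (xc t)
    have h3 := part2 t ht
    have h4 : (0:ℝ) ≤ c2 * ‖xc t‖ ^ 2 := mul_nonneg hc2.le (sq_nonneg _)
    linarith
  have hq2 : ∀ t : ℝ, 0 ≤ t → c2 * ‖xc t‖ ^ 2 ≤ B := by
    intro t ht
    have h1 := hb1 (xt t)
    have h2 := hb2 (xc t)
    have h3 := part2 t ht
    have h4 : (0:ℝ) ≤ c1 * ‖xt t‖ ^ 2 := mul_nonneg hc1.le (sq_nonneg _)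
    linarith
  refine ⟨max (Real.sqrt (B / c1)) (Real.sqrt (B / c2)), fun t ht => ?_⟩
  constructor
  · have : ‖xt t‖ ^ 2 ≤ B / c1 := (le_div_iff₀' hc1).mpr (hq1 t ht)
    calc ‖xt t‖ = Real.sqrt (‖xt t‖ ^ 2) := (Real.sqrt_sq (norm_nonneg _)).symm
      _ ≤ Real.sqrt (B / c1) := Real.sqrt_le_sqrt this
      _ ≤ _ := le_max_left _ _
  · have : ‖xc t‖ ^ 2 ≤ B / c2 := (le_div_iff₀' hc2).mpr (hq2 t ht)
    calc ‖xc t‖ = Real.sqrt (‖xc t‖ ^ 2) := (Real.sqrt_sq (norm_nonneg _)).symm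
      _ ≤ Real.sqrt (B / c2) := Real.sqrt_le_sqrt this
      _ ≤ _ := le_max_right _ _
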